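/- Let F, G : ℝ → ℝ and suppose x, y : ℝ → ℝ are twice differentiable with x(t) ≠ 0, y(t) ≠ 0, satisfying x'' = -ω(t)²x + F(y/x)/x³ and y'' = -ω(t)²y + G(y/x)/y³. If H : ℝ → ℝ is differentiable with H'(u) = u·F(u) - u⁻³·G(u) for all u ≠ 0, then I₀(t) = (1/2)(x(t)y'(t) - y(t)x'(t))² + H(y(t)/x(t)) has zero derivative, i.e., is a first integral. -/

import Mathlib

/-- The Ermakov invariant in the F,G form is a first integral. -/
theorem ermakov_invariant_FG_form
    (F G ω H x y x' y' : ℝ → ℝ)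
    (hx0 : ∀ t, x t ≠ 0) (hy0 : ∀ t, y t ≠ 0)
    (hx : ∀ t, HasDerivAt x (x' t) t)
    (hy : ∀ t, HasDerivAt y (y' t) t)
    (hx' : ∀ t, HasDerivAt x' (-(ω t)^2 * x t + F (y t / x t) / (x t)^3) t)
    (hy' : ∀ t, HasDerivAt y' (-(ω t)^2 * y t + G (y t / x t) / (y t)^3) t)
    (hH : ∀ u : ℝ, u ≠ 0 → HasDerivAt H (u * F u - G u / u^3) u) :
    ∀ t, deriv (fun s => (1/2) * (x s * y' s - y s * x' s)^2
      + H (y s / x s)) t = 0 := by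
  intro t
  have hxt := hx0 t
  have hyt := hy0 t
  have hu : HasDerivAt (fun s => y s / x s)
      ((y' t * x t - y t * x' t) / (x t)^2) t := (hy t).div (hx t) hxt
  have hHc := (hH _ (div_ne_zero hyt hxt)).comp t hu
  have hW : HasDerivAt (fun s => x s * y' s - y s * x' s)
      (x t * (-(ω t)^2 * y t + G (y t / x t) / (y t)^3)
        - y t * (-(ω t)^2 * x t + F (y t / x t) / (x t)^3)) t := by
    have h := ((hx t).mul (hy' t)).sub ((hy t).mul (hx' t))
    refine h.congr_deriv ?_
    ring
  have hI := ((hW.pow 2).const_mul ((1:ℝ)/2)).add hHc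
  simp only [Function.comp_def] at hI
  rw [(show HasDerivAt (fun s => (1/2) * (x s * y' s - y s * x' s)^2 + H (y s / x s)) _ t from hI).deriv]
  field_simp
  ring
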